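/- Picard iteration estimate: with z₀ = g and z_{n+1}(s,t) = g(s,t) + Σ_{p=1}^{m} ∫_{a_{p-1}(s)}^{a_p(s)} ∫_{b_{p-1}(t)}^{b_p(t)} k_p(s,t,σ,τ) φ(z_n(σ,τ)) dτ dσ, define M = Σ_{p=1}^{m} max k_p and D* = sup_{(σ,τ)∈Ω} |z₀(σ,τ) − z₁(σ,τ)|. Then for all n ≥ 0 and all (s,t) ∈ Ω, |z_n(s,t) − z_{n+1}(s,t)| ≤ (M L s t)ⁿ / (n!)² · D*. -/

import Mathlib

open MeasureTheory

lemma cont_extend {S : Set (ℝ×ℝ)} (hS : IsClosed S) {f : ℝ×ℝ → ℝ} (hf : ContinuousOn f S) :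
    ∃ F : ℝ×ℝ → ℝ, Continuous F ∧ ∀ x ∈ S, F x = f x := by
  obtain ⟨G, hG⟩ := ContinuousMap.exists_restrict_eq (Y := ℝ) hS
    ⟨S.restrict f, continuousOn_iff_continuous_restrict.mp hf⟩
  refine ⟨G, G.continuous, fun x hx => ?_⟩
  have := congrFun (congrArg ContinuousMap.toFun hG) ⟨x, hx⟩
  exact this

theorem picard_iteration_estimate
    (A : ℝ) (hA : 0 < A) (m : ℕ)
    (a b : ℕ → ℝ → ℝ)
    (ha_cont : ∀ p, ContinuousOn (a p) (Set.Icc 0 A))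
    (hb_cont : ∀ p, ContinuousOn (b p) (Set.Icc 0 A))
    (ha0 : ∀ s ∈ Set.Icc 0 A, a 0 s = 0)
    (ham : ∀ s ∈ Set.Icc 0 A, a m s = s)
    (ha_mono : ∀ p < m, ∀ s ∈ Set.Icc 0 A, a p s ≤ a (p + 1) s)
    (hb0 : ∀ t ∈ Set.Icc 0 A, b 0 t = 0)
    (hbm : ∀ t ∈ Set.Icc 0 A, b m t = t)
    (hb_mono : ∀ p < m, ∀ t ∈ Set.Icc 0 A, b p t ≤ b (p + 1) t)
    (k : ℕ → ℝ × ℝ → ℝ × ℝ → ℝ)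
    (hk_cont : ∀ p, ContinuousOn (fun q : (ℝ × ℝ) × (ℝ × ℝ) => k p q.1 q.2)
      ((Set.Icc 0 A ×ˢ Set.Icc 0 A) ×ˢ (Set.Icc 0 A ×ˢ Set.Icc 0 A)))
    (hk_nonneg : ∀ p, ∀ x ∈ Set.Icc 0 A ×ˢ Set.Icc 0 A,
      ∀ w ∈ Set.Icc 0 A ×ˢ Set.Icc 0 A, (0:ℝ) ≤ k p x w)
    (Mk : ℕ → ℝ) (M : ℝ)
    (hMk : ∀ p, ∀ x ∈ Set.Icc 0 A ×ˢ Set.Icc 0 A,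
      ∀ w ∈ Set.Icc 0 A ×ˢ Set.Icc 0 A, k p x w ≤ Mk p)
    (hM : M = ∑ p ∈ Finset.range m, Mk (p + 1))
    (g : ℝ × ℝ → ℝ) (hg : ContinuousOn g (Set.Icc 0 A ×ˢ Set.Icc 0 A))
    (φ : ℝ → ℝ) (L : ℝ) (hL : 0 < L)
    (hφ : ∀ x y : ℝ, |φ x - φ y| ≤ L * |x - y|)
    (z : ℕ → ℝ × ℝ → ℝ)
    (hz_cont : ∀ n, ContinuousOn (z n) (Set.Icc 0 A ×ˢ Set.Icc 0 A))
    (hz0 : ∀ s ∈ Set.Icc 0 A, ∀ t ∈ Set.Icc 0 A, z 0 (s, t) = g (s, t))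
    (hz_rec : ∀ n, ∀ s ∈ Set.Icc 0 A, ∀ t ∈ Set.Icc 0 A,
      z (n + 1) (s, t) = g (s, t) + ∑ p ∈ Finset.range m,
        ∫ σ in (a p s)..(a (p + 1) s), ∫ τ in (b p t)..(b (p + 1) t),
          k (p + 1) (s, t) (σ, τ) * φ (z n (σ, τ)))
    (Dstar : ℝ)
    (hDstar : Dstar = ⨆ w : (Set.Icc 0 A ×ˢ Set.Icc 0 A : Set (ℝ × ℝ)),
      |z 0 w - z 1 w|) :
    ∀ n : ℕ, ∀ s ∈ Set.Icc 0 A, ∀ t ∈ Set.Icc 0 A,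
      |z n (s, t) - z (n + 1) (s, t)| ≤
        (M * L * s * t) ^ n / ((n.factorial : ℝ)) ^ 2 * Dstar := by
  have hΩc : IsClosed ((Set.Icc (0:ℝ) A ×ˢ Set.Icc (0:ℝ) A) : Set (ℝ×ℝ)) :=
    isClosed_Icc.prod isClosed_Icc
  have hφc : Continuous φ := by
    have hlip : LipschitzWith (Real.toNNReal L) φ := by
      apply LipschitzWith.of_dist_le_mul
      intro x y
      rw [Real.dist_eq, Real.dist_eq, Real.coe_toNNReal L hL.le]
      exact hφ x y
    exact hlip.continuous
  have h00 : ((0:ℝ),(0:ℝ)) ∈ Set.Icc (0:ℝ) A ×ˢ Set.Icc (0:ℝ) A :=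
    Set.mem_prod.mpr ⟨Set.mem_Icc.mpr ⟨le_rfl, hA.le⟩, Set.mem_Icc.mpr ⟨le_rfl, hA.le⟩⟩
  have hMknn : ∀ p, 0 ≤ Mk p := fun p =>
    (hk_nonneg p _ h00 _ h00).trans (hMk p _ h00 _ h00)
  have hMnn : 0 ≤ M := by
    rw [hM]; exact Finset.sum_nonneg fun p _ => hMknn (p+1)
  have hDnn : 0 ≤ Dstar := by
    rw [hDstar]; exact Real.iSup_nonneg fun w => abs_nonneg _
  have achain : ∀ s ∈ Set.Icc (0:ℝ) A, ∀ j : ℕ, j ≤ m → ∀ i : ℕ, i ≤ j → a i s ≤ a j s := by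
    intro s hs j
    induction j with
    | zero =>
      intro _ i hi
      obtain rfl := Nat.le_zero.mp hi
      exact le_rfl
    | succ j ih =>
      intro hjm i hi
      rcases Nat.eq_or_lt_of_le hi with h | h
      · exact le_of_eq (by rw [h])
      · exact (ih (by omega) i (by omega)).trans (ha_mono j (by omega) s hs)
  have bchain : ∀ t ∈ Set.Icc (0:ℝ) A, ∀ j : ℕ, j ≤ m → ∀ i : ℕ, i ≤ j → b i t ≤ b j t := by
    intro t ht j
    induction j with
    | zero =>
      intro _ i hi
      obtain rfl := Nat.le_zero.mp hi
      exact le_rfl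
    | succ j ih =>
      intro hjm i hi
      rcases Nat.eq_or_lt_of_le hi with h | h
      · exact le_of_eq (by rw [h])
      · exact (ih (by omega) i (by omega)).trans (hb_mono j (by omega) t ht)
  have key : ∀ n : ℕ, ∀ s ∈ Set.Icc (0:ℝ) A, ∀ t ∈ Set.Icc (0:ℝ) A,
      |z n (s, t) - z (n + 1) (s, t)| ≤
        (M * L) ^ n / ((n.factorial : ℝ)) ^ 2 * Dstar * s ^ n * t ^ n := by
    intro n
    induction n with
    | zero =>
      intro s hs t ht
      simp only [pow_zero, mul_one, Nat.factorial_zero, Nat.cast_one, one_pow, div_one, one_mul]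
      rw [hDstar]
      have hcmp : IsCompact ((Set.Icc (0:ℝ) A ×ˢ Set.Icc (0:ℝ) A) : Set (ℝ×ℝ)) :=
        isCompact_Icc.prod isCompact_Icc
      have hfc : ContinuousOn (fun w => |z 0 w - z 1 w|)
          ((Set.Icc (0:ℝ) A ×ˢ Set.Icc (0:ℝ) A) : Set (ℝ×ℝ)) :=
        ((hz_cont 0).sub (hz_cont 1)).abs
      have hbdd := hcmp.bddAbove_image hfc
      obtain ⟨B, hB⟩ := hbdd
      have hb : BddAbove (Set.range fun w : (Set.Icc (0:ℝ) A ×ˢ Set.Icc (0:ℝ) A : Set (ℝ×ℝ)) =>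
          |z 0 ↑w - z 1 ↑w|) := by
        refine ⟨B, ?_⟩
        rintro x ⟨w, rfl⟩
        exact hB ⟨w, w.2, rfl⟩
      exact le_ciSup hb ⟨(s, t), Set.mem_prod.mpr ⟨hs, ht⟩⟩
    | succ n ih =>
      intro s hs t ht
      have hs0 : (0:ℝ) ≤ s := (Set.mem_Icc.mp hs).1
      have hsA : s ≤ A := (Set.mem_Icc.mp hs).2
      have ht0 : (0:ℝ) ≤ t := (Set.mem_Icc.mp ht).1
      have htA : t ≤ A := (Set.mem_Icc.mp ht).2
      have hcn : 0 ≤ (M * L) ^ n / ((n.factorial : ℝ)) ^ 2 * Dstar :=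
        mul_nonneg (div_nonneg (pow_nonneg (mul_nonneg hMnn hL.le) n) (by positivity)) hDnn
      obtain ⟨Z1, hZ1c, hZ1e⟩ := cont_extend hΩc (hz_cont n)
      obtain ⟨Z2, hZ2c, hZ2e⟩ := cont_extend hΩc (hz_cont (n+1))
      rw [hz_rec n s hs t ht, hz_rec (n+1) s hs t ht, add_sub_add_left_eq_sub,
        ← Finset.sum_sub_distrib]
      refine (Finset.abs_sum_le_sum_abs _ _).trans ?_
      have hper : ∀ p ∈ Finset.range m,
          |(∫ σ in (a p s)..(a (p + 1) s), ∫ τ in (b p t)..(b (p + 1) t),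
              k (p + 1) (s, t) (σ, τ) * φ (z n (σ, τ))) -
            ∫ σ in (a p s)..(a (p + 1) s), ∫ τ in (b p t)..(b (p + 1) t),
              k (p + 1) (s, t) (σ, τ) * φ (z (n+1) (σ, τ))| ≤
          Mk (p+1) * ((L * ((M * L) ^ n / ((n.factorial : ℝ)) ^ 2 * Dstar)) *
            (s ^ (n+1) / ((n:ℝ)+1)) * (t ^ (n+1) / ((n:ℝ)+1))) := by
        intro p hp
        rw [Finset.mem_range] at hp
        have hα01 : a p s ≤ a (p+1) s := ha_mono p hp s hs
        have hβ01 : b p t ≤ b (p+1) t := hb_mono p hp t ht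
        have hα0 : 0 ≤ a p s := by
          have := achain s hs p hp.le 0 (Nat.zero_le p)
          rwa [ha0 s hs] at this
        have hα1 : a (p+1) s ≤ s := by
          have := achain s hs m le_rfl (p+1) hp
          rwa [ham s hs] at this
        have hβ0 : 0 ≤ b p t := by
          have := bchain t ht p hp.le 0 (Nat.zero_le p)
          rwa [hb0 t ht] at this
        have hβ1 : b (p+1) t ≤ t := by
          have := bchain t ht m le_rfl (p+1) hp
          rwa [hbm t ht] at this
        have hstm : (s, t) ∈ Set.Icc (0:ℝ) A ×ˢ Set.Icc (0:ℝ) A :=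
          Set.mem_prod.mpr ⟨hs, ht⟩
        have hKcont : ContinuousOn (fun w => k (p+1) (s,t) w)
            ((Set.Icc (0:ℝ) A ×ˢ Set.Icc (0:ℝ) A) : Set (ℝ×ℝ)) := by
          have hmap : ∀ w ∈ ((Set.Icc (0:ℝ) A ×ˢ Set.Icc (0:ℝ) A) : Set (ℝ×ℝ)),
              (((s,t), w) : (ℝ×ℝ)×(ℝ×ℝ)) ∈
                (Set.Icc 0 A ×ˢ Set.Icc 0 A) ×ˢ (Set.Icc 0 A ×ˢ Set.Icc 0 A) :=
            fun w hw => Set.mem_prod.mpr ⟨hstm, hw⟩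
          exact (hk_cont (p+1)).comp
            ((continuous_const.prodMk continuous_id).continuousOn) hmap
        obtain ⟨K, hKc, hKe⟩ := cont_extend hΩc hKcont
        have hKe' : ∀ x ∈ ((Set.Icc (0:ℝ) A ×ˢ Set.Icc (0:ℝ) A) : Set (ℝ×ℝ)),
            K x = k (p+1) (s,t) x := hKe
        have hH1c : Continuous (fun w => K w * φ (Z1 w)) := hKc.mul (hφc.comp hZ1c)
        have hH2c : Continuous (fun w => K w * φ (Z2 w)) := hKc.mul (hφc.comp hZ2c)
        have hmemΩ : ∀ σ ∈ Set.uIcc (a p s) (a (p+1) s), ∀ τ ∈ Set.uIcc (b p t) (b (p+1) t),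
            ((σ,τ) : ℝ×ℝ) ∈ ((Set.Icc (0:ℝ) A ×ˢ Set.Icc (0:ℝ) A) : Set (ℝ×ℝ)) := by
          intro σ hσ τ hτ
          rw [Set.uIcc_of_le hα01, Set.mem_Icc] at hσ
          rw [Set.uIcc_of_le hβ01, Set.mem_Icc] at hτ
          exact Set.mem_prod.mpr ⟨Set.mem_Icc.mpr ⟨hα0.trans hσ.1, hσ.2.trans (hα1.trans hsA)⟩,
            Set.mem_Icc.mpr ⟨hβ0.trans hτ.1, hτ.2.trans (hβ1.trans htA)⟩⟩
        have houter1 : (∫ σ in (a p s)..(a (p + 1) s), ∫ τ in (b p t)..(b (p + 1) t),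
              k (p + 1) (s, t) (σ, τ) * φ (z n (σ, τ)))
            = ∫ σ in (a p s)..(a (p + 1) s), ∫ τ in (b p t)..(b (p + 1) t), K (σ,τ) * φ (Z1 (σ,τ)) := by
          apply intervalIntegral.integral_congr
          intro σ hσ
          apply intervalIntegral.integral_congr
          intro τ hτ
          have hm := hmemΩ σ hσ τ hτ
          show k (p+1) (s,t) (σ,τ) * φ (z n (σ,τ)) = K (σ,τ) * φ (Z1 (σ,τ))
          rw [hKe' _ hm, hZ1e _ hm]
        have houter2 : (∫ σ in (a p s)..(a (p + 1) s), ∫ τ in (b p t)..(b (p + 1) t),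
              k (p + 1) (s, t) (σ, τ) * φ (z (n+1) (σ, τ)))
            = ∫ σ in (a p s)..(a (p + 1) s), ∫ τ in (b p t)..(b (p + 1) t), K (σ,τ) * φ (Z2 (σ,τ)) := by
          apply intervalIntegral.integral_congr
          intro σ hσ
          apply intervalIntegral.integral_congr
          intro τ hτ
          have hm := hmemΩ σ hσ τ hτ
          show k (p+1) (s,t) (σ,τ) * φ (z (n+1) (σ,τ)) = K (σ,τ) * φ (Z2 (σ,τ))
          rw [hKe' _ hm, hZ2e _ hm]
        have hF1c : Continuous fun σ => ∫ τ in (b p t)..(b (p + 1) t), K (σ,τ) * φ (Z1 (σ,τ)) :=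
          intervalIntegral.continuous_parametric_intervalIntegral_of_continuous'
            (f := fun σ τ => K (σ,τ) * φ (Z1 (σ,τ))) (μ := volume) hH1c _ _
        have hF2c : Continuous fun σ => ∫ τ in (b p t)..(b (p + 1) t), K (σ,τ) * φ (Z2 (σ,τ)) :=
          intervalIntegral.continuous_parametric_intervalIntegral_of_continuous'
            (f := fun σ τ => K (σ,τ) * φ (Z2 (σ,τ))) (μ := volume) hH2c _ _
        rw [houter1, houter2,
          ← intervalIntegral.integral_sub (hF1c.intervalIntegrable _ _) (hF2c.intervalIntegrable _ _)]
        have hQnn : 0 ≤ Mk (p+1) * (L * ((M * L) ^ n / ((n.factorial : ℝ)) ^ 2 * Dstar)) :=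
          mul_nonneg (hMknn _) (mul_nonneg hL.le hcn)
        have hptw : ∀ σ ∈ Set.Icc (a p s) (a (p+1) s),
            |(∫ τ in (b p t)..(b (p + 1) t), K (σ,τ) * φ (Z1 (σ,τ))) -
              ∫ τ in (b p t)..(b (p + 1) t), K (σ,τ) * φ (Z2 (σ,τ))| ≤
            (Mk (p+1) * (L * ((M * L) ^ n / ((n.factorial : ℝ)) ^ 2 * Dstar))) * σ ^ n *
              (t ^ (n+1) / ((n:ℝ)+1)) := by
          intro σ hσ
          have hσu : σ ∈ Set.uIcc (a p s) (a (p+1) s) := by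
            rw [Set.uIcc_of_le hα01]; exact hσ
          have hσ0 : 0 ≤ σ := hα0.trans (Set.mem_Icc.mp hσ).1
          have hc1 : Continuous fun τ => K (σ,τ) * φ (Z1 (σ,τ)) :=
            hH1c.comp (continuous_const.prodMk continuous_id)
          have hc2 : Continuous fun τ => K (σ,τ) * φ (Z2 (σ,τ)) :=
            hH2c.comp (continuous_const.prodMk continuous_id)
          rw [← intervalIntegral.integral_sub (hc1.intervalIntegrable _ _) (hc2.intervalIntegrable _ _)]
          refine (intervalIntegral.abs_integral_le_integral_abs hβ01).trans ?_
          have hbnd : ∀ τ ∈ Set.Icc (b p t) (b (p+1) t),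
              |K (σ,τ) * φ (Z1 (σ,τ)) - K (σ,τ) * φ (Z2 (σ,τ))| ≤
              (Mk (p+1) * (L * ((M * L) ^ n / ((n.factorial : ℝ)) ^ 2 * Dstar))) * σ ^ n * τ ^ n := by
            intro τ hτ
            have hτu : τ ∈ Set.uIcc (b p t) (b (p+1) t) := by
              rw [Set.uIcc_of_le hβ01]; exact hτ
            have hm := hmemΩ σ hσu τ hτu
            have hτ0 : 0 ≤ τ := hβ0.trans (Set.mem_Icc.mp hτ).1
            have hσA : σ ∈ Set.Icc (0:ℝ) A := (Set.mem_prod.mp hm).1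
            have hτA : τ ∈ Set.Icc (0:ℝ) A := (Set.mem_prod.mp hm).2
            rw [← mul_sub, abs_mul, hKe' _ hm, hZ1e _ hm, hZ2e _ hm,
              abs_of_nonneg (hk_nonneg (p+1) _ hstm _ hm)]
            have hstep : |φ (z n (σ,τ)) - φ (z (n+1) (σ,τ))| ≤
                L * ((M * L) ^ n / ((n.factorial : ℝ)) ^ 2 * Dstar * σ ^ n * τ ^ n) :=
              (hφ _ _).trans (mul_le_mul_of_nonneg_left (ih σ hσA τ hτA) hL.le)
            calc k (p+1) (s,t) (σ,τ) * |φ (z n (σ,τ)) - φ (z (n+1) (σ,τ))|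
                ≤ Mk (p+1) * (L * ((M * L) ^ n / ((n.factorial : ℝ)) ^ 2 * Dstar * σ ^ n * τ ^ n)) :=
                  mul_le_mul (hMk (p+1) _ hstm _ hm) hstep (abs_nonneg _) (hMknn _)
              _ = (Mk (p+1) * (L * ((M * L) ^ n / ((n.factorial : ℝ)) ^ 2 * Dstar))) * σ ^ n * τ ^ n := by
                  ring
          have h12c : Continuous fun τ => |K (σ,τ) * φ (Z1 (σ,τ)) - K (σ,τ) * φ (Z2 (σ,τ))| :=
            ((hH1c.comp (continuous_const.prodMk continuous_id)).sub
              (hH2c.comp (continuous_const.prodMk continuous_id))).abs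
          have hbc : Continuous fun τ : ℝ =>
              (Mk (p+1) * (L * ((M * L) ^ n / ((n.factorial : ℝ)) ^ 2 * Dstar))) * σ ^ n * τ ^ n :=
            continuous_const.mul (continuous_pow n)
          refine (intervalIntegral.integral_mono_on hβ01 (h12c.intervalIntegrable _ _)
            (hbc.intervalIntegrable _ _) hbnd).trans ?_
          have hmono : (∫ τ in (b p t)..(b (p+1) t),
                (Mk (p+1) * (L * ((M * L) ^ n / ((n.factorial : ℝ)) ^ 2 * Dstar))) * σ ^ n * τ ^ n)
              ≤ ∫ τ in (0:ℝ)..t,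
                (Mk (p+1) * (L * ((M * L) ^ n / ((n.factorial : ℝ)) ^ 2 * Dstar))) * σ ^ n * τ ^ n := by
            apply intervalIntegral.integral_mono_interval hβ0 hβ01 hβ1
            · filter_upwards [ae_restrict_mem measurableSet_Ioc] with τ hτ
              exact mul_nonneg (mul_nonneg hQnn (pow_nonneg hσ0 n)) (pow_nonneg hτ.1.le n)
            · exact hbc.intervalIntegrable _ _
          refine hmono.trans_eq ?_
          rw [intervalIntegral.integral_const_mul, integral_pow]
          push_cast
          simp
        have hF12c : Continuous fun σ =>
            |(∫ τ in (b p t)..(b (p + 1) t), K (σ,τ) * φ (Z1 (σ,τ))) -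
              ∫ τ in (b p t)..(b (p + 1) t), K (σ,τ) * φ (Z2 (σ,τ))| := (hF1c.sub hF2c).abs
        have hgoutc : Continuous fun σ : ℝ =>
            (Mk (p+1) * (L * ((M * L) ^ n / ((n.factorial : ℝ)) ^ 2 * Dstar))) * σ ^ n *
              (t ^ (n+1) / ((n:ℝ)+1)) :=
          (continuous_const.mul (continuous_pow n)).mul continuous_const
        refine (intervalIntegral.abs_integral_le_integral_abs hα01).trans ?_
        refine (intervalIntegral.integral_mono_on hα01 (hF12c.intervalIntegrable _ _)
          (hgoutc.intervalIntegrable _ _) hptw).trans ?_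
        have hmono2 : (∫ σ in (a p s)..(a (p+1) s),
              (Mk (p+1) * (L * ((M * L) ^ n / ((n.factorial : ℝ)) ^ 2 * Dstar))) * σ ^ n *
                (t ^ (n+1) / ((n:ℝ)+1)))
            ≤ ∫ σ in (0:ℝ)..s,
              (Mk (p+1) * (L * ((M * L) ^ n / ((n.factorial : ℝ)) ^ 2 * Dstar))) * σ ^ n *
                (t ^ (n+1) / ((n:ℝ)+1)) := by
          apply intervalIntegral.integral_mono_interval hα0 hα01 hα1
          · filter_upwards [ae_restrict_mem measurableSet_Ioc] with σ hσ
            have ht1 : 0 ≤ t ^ (n+1) / ((n:ℝ)+1) := by positivity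
            exact mul_nonneg (mul_nonneg hQnn (pow_nonneg hσ.1.le n)) ht1
          · exact hgoutc.intervalIntegrable _ _
        refine hmono2.trans_eq ?_
        have hfe : (fun σ : ℝ =>
            (Mk (p+1) * (L * ((M * L) ^ n / ((n.factorial : ℝ)) ^ 2 * Dstar))) * σ ^ n *
              (t ^ (n+1) / ((n:ℝ)+1)))
            = fun σ : ℝ => ((Mk (p+1) * (L * ((M * L) ^ n / ((n.factorial : ℝ)) ^ 2 * Dstar))) *
              (t ^ (n+1) / ((n:ℝ)+1))) * σ ^ n := by
          funext σ; ring
        rw [hfe, intervalIntegral.integral_const_mul, integral_pow]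
        push_cast
        simp
        ring
      refine (Finset.sum_le_sum hper).trans ?_
      rw [← Finset.sum_mul, ← hM]
      apply le_of_eq
      have hfac : (((n+1).factorial : ℕ) : ℝ) = ((n:ℝ)+1) * ((n.factorial : ℕ) : ℝ) := by
        push_cast [Nat.factorial_succ]; ring
      rw [hfac]
      have h1 : ((n.factorial : ℕ) : ℝ) ≠ 0 := Nat.cast_ne_zero.mpr n.factorial_ne_zero
      have h2 : ((n:ℝ)+1) ≠ 0 := by positivity
      field_simp
      ring
  intro n s hs t ht
  refine (key n s hs t ht).trans_eq ?_
  ring
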